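/- Let Σ = ℕ^ℕ with the one-sided shift σ, and let Jσ : Σ → (0,∞) be a function such that log Jσ has bounded oscillation; set S = Σ_{k≥1} osc_k(log Jσ) < ∞. For x, y, w ∈ Σ and n ≥ 0 define x^n, y^n ∈ Σ by prepending the reversed length-n prefix of w to x and to y respectively (x^n(j) = w(n−1−j) for 0 ≤ j < n and x^n(j) = x(j−n) for j ≥ n). Then the limit J_{x,y}(w) = lim_{n→∞} Jσ^n(x^n)/Jσ^n(y^n) exists, the convergence is uniform over all (x, y, w) ∈ Σ×Σ×Σ, the limit function (x, y, w) ↦ J_{x,y}(w) is continuous on Σ×Σ×Σ, and e^{−S} ≤ J_{x,y}(w) ≤ e^{S} for all (x, y, w). -/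

import Mathlib

open Filter

/-- The one-sided shift on `Σ = ℕ^ℕ`. -/
def shiftMap : (ℕ → ℕ) → (ℕ → ℕ) := fun x n => x (n + 1)

/-- The cylinder `[w]` of a word `w` of length `k`. -/
def cylinder {k : ℕ} (w : Fin k → ℕ) : Set (ℕ → ℕ) :=
  {x | ∀ j : Fin k, x (j : ℕ) = w j}

/-- `Jσ^n(z) = ∏_{i<n} Jσ(σ^i z)`. -/
def jprod (J : (ℕ → ℕ) → ℝ) (n : ℕ) (z : ℕ → ℕ) : ℝ :=
  ∏ i ∈ Finset.range n, J (shiftMap^[i] z)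

/-- The set of differences `ψ(x) − ψ(y)` over pairs `x, y` in a common cylinder of
length `k`. -/
def oscSet (ψ : (ℕ → ℕ) → ℝ) (k : ℕ) : Set ℝ :=
  {r | ∃ (w : Fin k → ℕ) (x y : ℕ → ℕ), x ∈ cylinder w ∧ y ∈ cylinder w ∧ r = ψ x - ψ y}

/-- The `k`-oscillation `osc_k(ψ)`. -/
noncomputable def osc (ψ : (ℕ → ℕ) → ℝ) (k : ℕ) : ℝ := sSup (oscSet ψ k)

/-- `x^n`: prepend the reversed length-`n` prefix of `w` to `x`. -/
def prependRev (w : ℕ → ℕ) (n : ℕ) (x : ℕ → ℕ) : ℕ → ℕ :=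
  fun j => if j < n then w (n - 1 - j) else x (j - n)

lemma mem_oscSet (ψ : (ℕ → ℕ) → ℝ) (k : ℕ) (x y : ℕ → ℕ)
    (h : ∀ j < k, x j = y j) : ψ x - ψ y ∈ oscSet ψ k :=
  ⟨fun j => x j, x, y, fun _ => rfl, fun j => (h j j.isLt).symm, rfl⟩

lemma osc_nonneg (ψ : (ℕ → ℕ) → ℝ) (k : ℕ) (hb : BddAbove (oscSet ψ k)) :
    0 ≤ osc ψ k := by
  have h0 : (0:ℝ) ∈ oscSet ψ k := by
    have := mem_oscSet ψ k (fun _ => 0) (fun _ => 0) (fun _ _ => rfl)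
    simpa using this
  exact le_csSup hb h0

lemma abs_sub_le_osc (ψ : (ℕ → ℕ) → ℝ) (k : ℕ) (hb : BddAbove (oscSet ψ k))
    (x y : ℕ → ℕ) (h : ∀ j < k, x j = y j) : |ψ x - ψ y| ≤ osc ψ k := by
  rw [abs_sub_le_iff]
  exact ⟨le_csSup hb (mem_oscSet ψ k x y h),
    le_csSup hb (mem_oscSet ψ k y x (fun j hj => (h j hj).symm))⟩

lemma cont_of_osc (ψ : (ℕ → ℕ) → ℝ) (hb : ∀ k, BddAbove (oscSet ψ k))
    (hsum : Summable fun k : ℕ => osc ψ (k + 1)) : Continuous ψ := by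
  rw [continuous_iff_continuousAt]
  intro x
  rw [ContinuousAt, Metric.tendsto_nhds]
  intro ε hε
  obtain ⟨k, hk⟩ := (Metric.tendsto_nhds.1 hsum.tendsto_atTop_zero ε hε).exists
  rw [Real.dist_eq, sub_zero] at hk
  have hU : ∀ j, {y : ℕ → ℕ | y j = x j} ∈ nhds x := by
    intro j
    have hop : IsOpen {y : ℕ → ℕ | y j = x j} := by
      have he : {y : ℕ → ℕ | y j = x j} = (fun y : ℕ → ℕ => y j) ⁻¹' {x j} := rfl
      rw [he]
      exact (continuous_apply j).isOpen_preimage _ (isOpen_discrete _)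
    exact hop.mem_nhds rfl
  have hU2 : (⋂ j ∈ Finset.range (k + 1), {y : ℕ → ℕ | y j = x j}) ∈ nhds x :=
    (Filter.biInter_finset_mem _).2 fun j _ => hU j
  filter_upwards [hU2] with y hy
  have hagree : ∀ j < k + 1, y j = x j := by
    intro j hj
    have := Set.mem_iInter₂.1 hy j (Finset.mem_range.2 hj)
    exact this
  calc dist (ψ y) (ψ x) = |ψ y - ψ x| := Real.dist_eq _ _
    _ ≤ osc ψ (k + 1) := abs_sub_le_osc ψ (k + 1) (hb _) y x hagree
    _ ≤ |osc ψ (k + 1)| := le_abs_self _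
    _ < ε := hk

lemma shift_prepend (w x : ℕ → ℕ) (n : ℕ) :
    shiftMap (prependRev w (n + 1) x) = prependRev w n x := by
  funext j
  simp only [shiftMap, prependRev]
  rcases lt_or_ge j n with h | h
  · rw [if_pos (by omega), if_pos h]
    congr 1; omega
  · rw [if_neg (by omega), if_neg (by omega)]
    congr 1; omega

lemma jprod_succ (J : (ℕ → ℕ) → ℝ) (n : ℕ) (z : ℕ → ℕ) :
    jprod J (n + 1) z = jprod J n (shiftMap z) * J z := by
  unfold jprod
  rw [Finset.prod_range_succ']
  simp [Function.iterate_succ_apply]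

lemma jprod_pos (J : (ℕ → ℕ) → ℝ) (hJpos : ∀ x, 0 < J x) (n : ℕ) (z : ℕ → ℕ) :
    0 < jprod J n z :=
  Finset.prod_pos fun _ _ => hJpos _

noncomputable def dfun (J : (ℕ → ℕ) → ℝ) (k : ℕ)
    (p : (ℕ → ℕ) × (ℕ → ℕ) × (ℕ → ℕ)) : ℝ :=
  Real.log (J (prependRev p.2.2 (k + 1) p.1)) - Real.log (J (prependRev p.2.2 (k + 1) p.2.1))

noncomputable def Ffun (J : (ℕ → ℕ) → ℝ) (n : ℕ)
    (p : (ℕ → ℕ) × (ℕ → ℕ) × (ℕ → ℕ)) : ℝ :=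
  ∑ k ∈ Finset.range n, dfun J k p

lemma prepend_agree (w x y : ℕ → ℕ) (n : ℕ) :
    ∀ j < n, prependRev w n x j = prependRev w n y j := by
  intro j hj
  simp only [prependRev, if_pos hj]

lemma abs_dfun_le (J : (ℕ → ℕ) → ℝ)
    (hbdd : ∀ k : ℕ, BddAbove (oscSet (fun z => Real.log (J z)) k))
    (k : ℕ) (p : (ℕ → ℕ) × (ℕ → ℕ) × (ℕ → ℕ)) :
    |dfun J k p| ≤ osc (fun z => Real.log (J z)) (k + 1) :=
  abs_sub_le_osc _ (k + 1) (hbdd _) _ _ (prepend_agree p.2.2 p.1 p.2.1 (k + 1))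

lemma quot_eq (J : (ℕ → ℕ) → ℝ) (hJpos : ∀ x, 0 < J x) (n : ℕ)
    (p : (ℕ → ℕ) × (ℕ → ℕ) × (ℕ → ℕ)) :
    jprod J n (prependRev p.2.2 n p.1) / jprod J n (prependRev p.2.2 n p.2.1)
      = Real.exp (Ffun J n p) := by
  induction n with
  | zero => simp [jprod, Ffun]
  | succ n ih =>
    rw [jprod_succ, jprod_succ, shift_prepend, shift_prepend, ← div_mul_div_comm, ih]
    simp only [Ffun, Finset.sum_range_succ, Real.exp_add]
    congr 1
    rw [show J (prependRev p.2.2 (n + 1) p.1) = Real.exp (Real.log (J (prependRev p.2.2 (n + 1) p.1))) from (Real.exp_log (hJpos _)).symm,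
      show J (prependRev p.2.2 (n + 1) p.2.1) = Real.exp (Real.log (J (prependRev p.2.2 (n + 1) p.2.1))) from (Real.exp_log (hJpos _)).symm,
      ← Real.exp_sub]
    rfl

lemma exp_lip {a b S : ℝ} (ha : a ≤ S) (hb : b ≤ S) :
    |Real.exp a - Real.exp b| ≤ Real.exp S * |a - b| := by
  have key : ∀ u v : ℝ, v ≤ u → u ≤ S → Real.exp u - Real.exp v ≤ Real.exp S * (u - v) := by
    intro u v huv hu
    have h1 : v - u + 1 ≤ Real.exp (v - u) := Real.add_one_le_exp _
    have h2 : Real.exp (v - u) * Real.exp u = Real.exp v := by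
      rw [← Real.exp_add]; ring_nf
    have h3 : Real.exp u ≤ Real.exp S := Real.exp_le_exp.2 hu
    nlinarith [Real.exp_pos u]
  rcases le_total b a with h | h
  · rw [abs_of_nonneg (by simpa using Real.exp_le_exp.2 h), abs_of_nonneg (by linarith)]
    exact key a b h ha
  · rw [abs_of_nonpos (by simpa using Real.exp_le_exp.2 h), abs_of_nonpos (by linarith)]
    have := key b a h hb
    linarith

/-- **Lemma A.2.** If `log Jσ` has bounded oscillation with `S = ∑_{k≥1} osc_k(log Jσ)`,
then `J_{x,y}(w) = lim_n Jσ^n(x^n)/Jσ^n(y^n)` exists uniformly in `(x,y,w)`, is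
continuous, and satisfies `e^{-S} ≤ J_{x,y}(w) ≤ e^{S}`. -/
theorem stmt11 (J : (ℕ → ℕ) → ℝ) (hJpos : ∀ x, 0 < J x)
    (hbdd : ∀ k : ℕ, BddAbove (oscSet (fun z => Real.log (J z)) k))
    (hsum : Summable fun k : ℕ => osc (fun z => Real.log (J z)) (k + 1)) :
    ∃ Jlim : (ℕ → ℕ) → (ℕ → ℕ) → (ℕ → ℕ) → ℝ,
      TendstoUniformly
        (fun (n : ℕ) (p : (ℕ → ℕ) × (ℕ → ℕ) × (ℕ → ℕ)) =>
          jprod J n (prependRev p.2.2 n p.1) / jprod J n (prependRev p.2.2 n p.2.1))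
        (fun p => Jlim p.1 p.2.1 p.2.2) atTop ∧
      Continuous (fun p : (ℕ → ℕ) × (ℕ → ℕ) × (ℕ → ℕ) => Jlim p.1 p.2.1 p.2.2) ∧
      ∀ x y w : ℕ → ℕ,
        Real.exp (-(∑' k : ℕ, osc (fun z => Real.log (J z)) (k + 1))) ≤ Jlim x y w ∧
        Jlim x y w ≤ Real.exp (∑' k : ℕ, osc (fun z => Real.log (J z)) (k + 1)) := by
  have hcnn : ∀ k : ℕ, 0 ≤ osc (fun z => Real.log (J z)) (k + 1) := fun k =>
    osc_nonneg _ (k + 1) (hbdd _)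
  have hdb : ∀ (k : ℕ) (p : (ℕ → ℕ) × (ℕ → ℕ) × (ℕ → ℕ)),
      ‖dfun J k p‖ ≤ osc (fun z => Real.log (J z)) (k + 1) := by
    intro k p
    rw [Real.norm_eq_abs]
    exact abs_dfun_le J hbdd k p
  have hFG : TendstoUniformly (fun n p => Ffun J n p)
      (fun p => ∑' k, dfun J k p) atTop := by
    have := tendstoUniformly_tsum_nat hsum hdb
    simpa [Ffun] using this
  have hdsum : ∀ p, Summable fun k => dfun J k p := fun p =>
    Summable.of_norm_bounded hsum (fun k => hdb k p)
  have hGle : ∀ p : (ℕ → ℕ) × (ℕ → ℕ) × (ℕ → ℕ),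
      |∑' k, dfun J k p| ≤ ∑' k : ℕ, osc (fun z => Real.log (J z)) (k + 1) := by
    intro p
    have h1 : ‖∑' k, dfun J k p‖ ≤ ∑' k, ‖dfun J k p‖ :=
      norm_tsum_le_tsum_norm ((hdsum p).norm)
    rw [Real.norm_eq_abs] at h1
    exact h1.trans (Summable.tsum_le_tsum (fun k => hdb k p) (hdsum p).norm hsum)
  have hFle : ∀ (n : ℕ) (p : (ℕ → ℕ) × (ℕ → ℕ) × (ℕ → ℕ)),
      |Ffun J n p| ≤ ∑' k : ℕ, osc (fun z => Real.log (J z)) (k + 1) := by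
    intro n p
    calc |Ffun J n p| ≤ ∑ k ∈ Finset.range n, |dfun J k p| :=
          Finset.abs_sum_le_sum_abs _ _
      _ ≤ ∑ k ∈ Finset.range n, osc (fun z => Real.log (J z)) (k + 1) :=
          Finset.sum_le_sum fun k _ => abs_dfun_le J hbdd k p
      _ ≤ ∑' k : ℕ, osc (fun z => Real.log (J z)) (k + 1) :=
          Summable.sum_le_tsum _ (fun k _ => hcnn k) hsum
  refine ⟨fun x y w => Real.exp (∑' k, dfun J k (x, y, w)), ?_, ?_, ?_⟩
  · -- uniform convergence
    have heq : (fun (n : ℕ) (p : (ℕ → ℕ) × (ℕ → ℕ) × (ℕ → ℕ)) =>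
        jprod J n (prependRev p.2.2 n p.1) / jprod J n (prependRev p.2.2 n p.2.1))
        = fun n p => Real.exp (Ffun J n p) := by
      funext n p
      exact quot_eq J hJpos n p
    rw [heq]
    rw [Metric.tendstoUniformly_iff]
    intro ε hε
    have hL : (0:ℝ) < Real.exp (∑' k : ℕ, osc (fun z => Real.log (J z)) (k + 1)) :=
      Real.exp_pos _
    filter_upwards [Metric.tendstoUniformly_iff.1 hFG
      (ε / Real.exp (∑' k : ℕ, osc (fun z => Real.log (J z)) (k + 1)))
      (by positivity)] with n hn p
    have h1 : dist (∑' k, dfun J k p) (Ffun J n p)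
        < ε / Real.exp (∑' k : ℕ, osc (fun z => Real.log (J z)) (k + 1)) := hn p
    have h2 := exp_lip (le_trans (le_abs_self _) (hGle p))
      (le_trans (le_abs_self _) (hFle n p))
    rw [Real.dist_eq] at h1 ⊢
    calc |Real.exp (∑' k, dfun J k p) - Real.exp (Ffun J n p)|
        ≤ Real.exp (∑' k : ℕ, osc (fun z => Real.log (J z)) (k + 1))
            * |(∑' k, dfun J k p) - Ffun J n p| := h2
      _ < Real.exp (∑' k : ℕ, osc (fun z => Real.log (J z)) (k + 1))
            * (ε / Real.exp (∑' k : ℕ, osc (fun z => Real.log (J z)) (k + 1))) :=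
          mul_lt_mul_of_pos_left h1 hL
      _ = ε := by field_simp
  · -- continuity
    have hψc : Continuous (fun z => Real.log (J z)) := cont_of_osc _ hbdd hsum
    have hdc : ∀ k, Continuous (dfun J k) := by
      intro k
      have hp1 : Continuous (fun p : (ℕ → ℕ) × (ℕ → ℕ) × (ℕ → ℕ) =>
          prependRev p.2.2 (k + 1) p.1) := by
        apply continuous_pi
        intro j
        simp only [prependRev]
        by_cases h : j < k + 1
        · simp only [if_pos h]
          exact (continuous_apply _).comp (continuous_snd.comp continuous_snd)
        · simp only [if_neg h]
          exact (continuous_apply _).comp continuous_fst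
      have hp2 : Continuous (fun p : (ℕ → ℕ) × (ℕ → ℕ) × (ℕ → ℕ) =>
          prependRev p.2.2 (k + 1) p.2.1) := by
        apply continuous_pi
        intro j
        simp only [prependRev]
        by_cases h : j < k + 1
        · simp only [if_pos h]
          exact (continuous_apply _).comp (continuous_snd.comp continuous_snd)
        · simp only [if_neg h]
          exact (continuous_apply _).comp (continuous_fst.comp continuous_snd)
      exact (hψc.comp hp1).sub (hψc.comp hp2)
    have hGc : Continuous (fun p : (ℕ → ℕ) × (ℕ → ℕ) × (ℕ → ℕ) => ∑' k, dfun J k p) :=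
      hFG.continuous (Filter.Eventually.of_forall fun n =>
        continuous_finset_sum _ fun k _ => hdc k).frequently
    exact Real.continuous_exp.comp hGc
  · intro x y w
    have h := hGle (x, y, w)
    rw [abs_le] at h
    exact ⟨Real.exp_le_exp.2 h.1, Real.exp_le_exp.2 h.2⟩
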